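/- Let φ ∈ ℂ^n be a unit vector, let R_φ = 2φφᴴ − I_n be the reflection operator about φ, let H = (1/√2)·[[1,1],[1,−1]] be the Hadamard matrix, and let e₀, e₁ be the standard basis vectors of ℂ². Define the operator C_φ = (I_n ⊗ H) · (R_φ ⊗ |1⟩⟨1| + I_n ⊗ |0⟩⟨0|) · (I_n ⊗ H) on ℂ^n ⊗ ℂ². Then for every vector ψ ∈ ℂ^n, C_φ (ψ ⊗ e₀) = ⟨φ,ψ⟩ · (φ ⊗ e₀) + (ψ − ⟨φ,ψ⟩·φ) ⊗ e₁. -/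

import Mathlib

open Matrix
open scoped Kronecker

/-- The outer product `φφᴴ` of a vector with itself: entries `φ i * conj (φ j)`. -/
def outer {n : ℕ} (φ : EuclideanSpace ℂ (Fin n)) : Matrix (Fin n) (Fin n) ℂ :=
  Matrix.of fun i j => φ i * star (φ j)

/-- The reflectOp operator `R_φ = 2φφᴴ − I`. -/
def reflectOp {n : ℕ} (φ : EuclideanSpace ℂ (Fin n)) : Matrix (Fin n) (Fin n) ℂ :=
  (2 : ℂ) • outer φ - 1

/-- The Hadamard matrix `(1/√2)·[[1,1],[1,−1]]`. -/
noncomputable def Had : Matrix (Fin 2) (Fin 2) ℂ :=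
  ((1 / Real.sqrt 2 : ℝ) : ℂ) • !![1, 1; 1, -1]

/-- `|0⟩⟨0|`. -/
def ket0bra0 : Matrix (Fin 2) (Fin 2) ℂ := !![1, 0; 0, 0]

/-- `|1⟩⟨1|`. -/
def ket1bra1 : Matrix (Fin 2) (Fin 2) ℂ := !![0, 0; 0, 1]

/-- The standard basis vector `e₀` of `ℂ²`. -/
def e0 : Fin 2 → ℂ := ![1, 0]

/-- The standard basis vector `e₁` of `ℂ²`. -/
def e1 : Fin 2 → ℂ := ![0, 1]

/-- The checking operator `C_φ = (I ⊗ H) · (R_φ ⊗ |1⟩⟨1| + I ⊗ |0⟩⟨0|) · (I ⊗ H)`. -/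
noncomputable def checkOp {n : ℕ} (φ : EuclideanSpace ℂ (Fin n)) :
    Matrix (Fin n × Fin 2) (Fin n × Fin 2) ℂ :=
  ((1 : Matrix (Fin n) (Fin n) ℂ) ⊗ₖ Had) *
    (reflectOp φ ⊗ₖ ket1bra1 + (1 : Matrix (Fin n) (Fin n) ℂ) ⊗ₖ ket0bra0) *
    ((1 : Matrix (Fin n) (Fin n) ℂ) ⊗ₖ Had)

lemma kron_mulVec {n : ℕ} (A : Matrix (Fin n) (Fin n) ℂ) (B : Matrix (Fin 2) (Fin 2) ℂ)
    (x : Fin n → ℂ) (y : Fin 2 → ℂ) :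
    (A ⊗ₖ B).mulVec (fun p => x p.1 * y p.2) =
      fun p => A.mulVec x p.1 * B.mulVec y p.2 := by
  funext p
  simp [mulVec, dotProduct, Fintype.sum_prod_type, Finset.sum_mul, Finset.mul_sum]
  apply Finset.sum_congr rfl
  intro j _
  ring

theorem checkOp_apply {n : ℕ} (φ : EuclideanSpace ℂ (Fin n)) (hφ : ‖φ‖ = 1)
    (ψ : EuclideanSpace ℂ (Fin n)) :
    (checkOp φ).mulVec (fun p => ψ p.1 * e0 p.2) =
      fun p => (inner ℂ φ ψ : ℂ) * (φ p.1 * e0 p.2) +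
        (ψ p.1 - (inner ℂ φ ψ : ℂ) * φ p.1) * e1 p.2 := by
  have s2 : ((Real.sqrt 2 : ℝ) : ℂ) * ((Real.sqrt 2 : ℝ) : ℂ) = 2 := by
    rw [← Complex.ofReal_mul, Real.mul_self_sqrt (by norm_num)]
    norm_num
  rw [checkOp, ← Matrix.mulVec_mulVec, ← Matrix.mulVec_mulVec, kron_mulVec]
  have h1 : (1 : Matrix (Fin n) (Fin n) ℂ).mulVec ψ = ψ := Matrix.one_mulVec ψ
  rw [h1]
  have hhe0 : Had.mulVec e0 = fun _ => ((1 / Real.sqrt 2 : ℝ) : ℂ) := by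
    funext c
    fin_cases c <;>
      simp [Had, e0, mulVec, dotProduct, Fin.sum_univ_two, Matrix.smul_apply]
  rw [hhe0]
  rw [Matrix.add_mulVec]
  rw [kron_mulVec (reflectOp φ) ket1bra1 ψ (fun _ => ((1 / Real.sqrt 2 : ℝ) : ℂ)),
    kron_mulVec 1 ket0bra0 ψ (fun _ => ((1 / Real.sqrt 2 : ℝ) : ℂ))]
  have hrefl : reflectOp φ *ᵥ ψ = fun i => 2 * (inner ℂ φ ψ : ℂ) * φ i - ψ i := by
    funext i
    have expand : ∀ j, reflectOp φ i j * ψ j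
        = 2 * ((starRingEnd ℂ) (φ j) * ψ j) * φ i
          - (1 : Matrix (Fin n) (Fin n) ℂ) i j * ψ j := by
      intro j
      simp [reflectOp, outer, Matrix.smul_apply, Matrix.sub_apply, Complex.star_def]
      ring
    simp only [mulVec, dotProduct, expand, Finset.sum_sub_distrib, ← Finset.sum_mul,
      ← Finset.mul_sum]
    simp [Matrix.one_apply, PiLp.inner_apply]
    left; exact Finset.sum_congr rfl fun _ _ => mul_comm _ _
  rw [hrefl, h1]
  have hk1 : ket1bra1 *ᵥ (fun _ => ((1 / Real.sqrt 2 : ℝ) : ℂ)) =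
      ![0, ((1 / Real.sqrt 2 : ℝ) : ℂ)] := by
    funext x
    fin_cases x <;> simp [ket1bra1, mulVec, dotProduct, Fin.sum_univ_two]
  have hk0 : ket0bra0 *ᵥ (fun _ => ((1 / Real.sqrt 2 : ℝ) : ℂ)) =
      ![((1 / Real.sqrt 2 : ℝ) : ℂ), 0] := by
    funext x
    fin_cases x <;> simp [ket0bra0, mulVec, dotProduct, Fin.sum_univ_two]
  rw [hk1, hk0]
  have hc : (((Real.sqrt 2 : ℝ) : ℂ))⁻¹ * (((Real.sqrt 2 : ℝ) : ℂ))⁻¹ = 1 / 2 := by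
    rw [← mul_inv, ← Complex.ofReal_mul, Real.mul_self_sqrt (by norm_num)]
    norm_num
  funext p
  obtain ⟨i, b⟩ := p
  fin_cases b
  · simp [mulVec, dotProduct, Fintype.sum_prod_type, Fin.sum_univ_two, Had,
      e0, e1, Matrix.one_apply, Finset.sum_ite_eq, mul_ite, ite_mul,
      Matrix.smul_apply, one_div, Complex.ofReal_inv]
    ring_nf
    linear_combination (2 * (inner ℂ φ ψ : ℂ) * φ i) * hc
  · simp [mulVec, dotProduct, Fintype.sum_prod_type, Fin.sum_univ_two, Had,
      e0, e1, Matrix.one_apply, Finset.sum_ite_eq, mul_ite, ite_mul,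
      Matrix.smul_apply, one_div, Complex.ofReal_inv]
    ring_nf
    linear_combination (2 * (ψ i - (inner ℂ φ ψ : ℂ) * φ i)) * hc
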